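/- arXiv:2001.05767 — 3 statements merged into one kernel-verified Lean document; each statement's English description precedes it below -/
import Mathlib

section
/- For integers k ≥ 1 and q ≥ 2, the minimum length n of a word over a q-symbol alphabet that contains every word of length k as a subsequence is exactly qk. -/
lemma sublist_join_replicate {q : ℕ} :
    ∀ (k : ℕ) (u : List (Fin q)), u.length ≤ k →
      u.Sublist (List.replicate k (List.finRange q)).flatten := by
  intro k
  induction k with
  | zero => intro u hu; simp at hu; simp [hu]
  | succ n ih =>
    intro u hu
    cases u with
    | nil => exact List.nil_sublist _
    | cons a t =>
      have ht : t.length ≤ n := by simpa using hu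
      have : (a :: t).Sublist (List.finRange q ++ (List.replicate n (List.finRange q)).flatten) := by
        have h1 : [a].Sublist (List.finRange q) :=
          List.singleton_sublist.mpr (List.mem_finRange a)
        simpa using List.Sublist.append h1 (ih t ht)
      simpa [List.replicate_succ] using this

/-- The minimum length of a `k`-universal word over a `q`-symbol alphabet is exactly `q * k`. -/
theorem min_length_universal_word (q k : ℕ) (hq : 2 ≤ q) (hk : 1 ≤ k) :
    IsLeast {n : ℕ | ∃ w : List (Fin q), w.length = n ∧
      ∀ u : List (Fin q), u.length = k → u.Sublist w} (q * k) := by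
  constructor
  · refine ⟨(List.replicate k (List.finRange q)).flatten, ?_, ?_⟩
    · simp [Nat.mul_comm]
    · intro u hu
      exact sublist_join_replicate k u (le_of_eq hu)
  · rintro n ⟨w, hwl, hw⟩
    have hcount : ∀ a : Fin q, k ≤ w.count a := by
      intro a
      have h := hw (List.replicate k a) (by simp)
      have := h.count_le a
      simpa using this
    have hlen : w.length = ∑ a : Fin q, w.count a := by
      classical
      have h2 := Multiset.sum_count_eq_card (s := Finset.univ)
        (m := (↑w : Multiset (Fin q))) (fun a _ => Finset.mem_univ a)
      simpa using h2.symm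
    have : q * k ≤ ∑ a : Fin q, w.count a := by
      calc q * k = ∑ _a : Fin q, k := by simp [Finset.sum_const, Nat.mul_comm]
        _ ≤ ∑ a : Fin q, w.count a := Finset.sum_le_sum fun a _ => hcount a
    omega
end

section
/- Let w be a word over a finite alphabet Σ with greedy universal decomposition w = u_1 ⋯ u_ℓ u', where each u_i is the minimal prefix of u_i ⋯ u_ℓ u' containing all symbols of Σ, and u' does not contain all symbols of Σ. If ℓ < k, then w is not k-universal; specifically, the word σ_1 σ_2 ⋯ σ_ℓ σ_{ℓ+1} of length ℓ+1 ≤ k is not a subsequence of w, where σ_i is the last symbol of u_i for i ≤ ℓ and σ_{ℓ+1} is any symbol of Σ not appearing in u'. -/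
private lemma cons_sublist_drop {α : Type*} {a : α} {s t r : List α}
    (h : (a :: s).Sublist (t ++ r)) (ha : a ∉ t) : (a :: s).Sublist r := by
  induction t with
  | nil => simpa using h
  | cons b t ih =>
    simp only [List.mem_cons, not_or] at ha
    cases h with
    | cons _ h => exact ih h ha.2
    | cons_cons _ h => exact absurd rfl ha.1

private lemma blocks_not_sublist {α : Type*} (bs : List (List α × α))
    (hmin : ∀ p ∈ bs, p.2 ∉ p.1) (u' : List α) (σ' : α) (hσ' : σ' ∉ u') :
    ¬ (bs.map Prod.snd ++ [σ']).Sublist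
        ((bs.map (fun p => p.1 ++ [p.2])).flatten ++ u') := by
  induction bs with
  | nil =>
    intro h
    exact hσ' (by simpa using h.subset (List.mem_singleton.mpr rfl))
  | cons p bs ih =>
    intro h
    simp only [List.map_cons, List.flatten_cons, List.cons_append, List.append_assoc] at h
    have h2 : (p.2 :: (bs.map Prod.snd ++ [σ'])).Sublist
        (p.1 ++ (p.2 :: ((bs.map (fun p => p.1 ++ [p.2])).flatten ++ u'))) := by
      simpa using h
    have h3 := cons_sublist_drop h2 (hmin p (by simp))
    exact ih (fun q hq => hmin q (by simp [hq])) (List.cons_sublist_cons.mp h3)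

/-- If `w = u_1 ⋯ u_ℓ u'` where each block `u_i = v_i ++ [σ_i]` contains all symbols, with
`σ_i` not occurring before its last position in its block, and `u'` misses the symbol `σ'`,
then with `ℓ < k` the word `σ_1 ⋯ σ_ℓ σ'` (of length `ℓ + 1 ≤ k`) is not a subsequence of `w`;
in particular `w` is not `k`-universal. -/
theorem greedy_decomposition_not_universal {α : Type*} [Fintype α]
    (hq : 2 ≤ Fintype.card α) (ℓ k : ℕ) (hk : ℓ < k)
    (v : Fin ℓ → List α) (σ : Fin ℓ → α)
    (hall : ∀ i, ∀ a : α, a ∈ v i ++ [σ i])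
    (hmin : ∀ i, σ i ∉ v i)
    (u' : List α) (σ' : α) (hσ' : σ' ∉ u') :
    ¬ (List.ofFn σ ++ [σ']).Sublist
        ((List.ofFn (fun i => v i ++ [σ i])).flatten ++ u') := by
  have := blocks_not_sublist (List.ofFn (fun i => (v i, σ i)))
    (by intro p hp; simp only [List.mem_ofFn] at hp; obtain ⟨i, rfl⟩ := hp; exact hmin i)
    u' σ' hσ'
  simpa [List.map_ofFn, Function.comp_def] using this
end

section
/- A word w over a finite alphabet Σ of size q is k-universal if and only if ν_Σ(w) ≥ k, where ν_Σ(w) is the number of complete blocks in the greedy universal decomposition of w. -/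
/-- Greedy universal decomposition counter: processing the word symbol by symbol, a block is
completed exactly when the set of symbols collected since the last completed block becomes the
whole alphabet.  `nuAux s w` is the number of blocks completed, starting with collected set `s`;
`nuAux ∅ w` is `ν_Σ(w)`, the number of complete blocks in the greedy universal decomposition. -/
def nuAux {q : ℕ} : Finset (Fin q) → List (Fin q) → ℕ
  | _, [] => 0
  | s, a :: rest =>
      if insert a s = Finset.univ then nuAux ∅ rest + 1 else nuAux (insert a s) rest

lemma nu_mono {q : ℕ} (w : List (Fin q)) :
    (∀ s t : Finset (Fin q), s ⊆ t → nuAux s w ≤ nuAux t w) ∧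
    (∀ t : Finset (Fin q), nuAux t w ≤ nuAux ∅ w + 1) := by
  induction w with
  | nil => simp [nuAux]
  | cons b rest ih =>
    obtain ⟨ih1, ih2⟩ := ih
    constructor
    · intro s t hst
      by_cases ht : insert b t = Finset.univ
      · by_cases hs : insert b s = Finset.univ
        · simp [nuAux, ht, hs]
        · simp only [nuAux, ht, hs, if_true, if_false]
          exact ih2 _
      · have hs : insert b s ≠ Finset.univ := by
          intro h
          apply ht
          exact Finset.univ_subset_iff.mp (h ▸ Finset.insert_subset_insert b hst)
        simp only [nuAux, ht, hs, if_false]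
        exact ih1 _ _ (Finset.insert_subset_insert b hst)
    · intro t
      by_cases ht : insert b t = Finset.univ
      · simp only [nuAux, ht, if_true]
        by_cases h0 : insert b (∅ : Finset (Fin q)) = Finset.univ
        · simp [h0]
        · simp only [h0, if_false]
          have := ih1 ∅ (insert b ∅) (Finset.empty_subset _)
          omega
      · simp only [nuAux, ht, if_false]
        by_cases h0 : insert b (∅ : Finset (Fin q)) = Finset.univ
        · exfalso
          exact ht (Finset.univ_subset_iff.mp (h0 ▸ Finset.insert_subset_insert b (Finset.empty_subset _)))
        · simp only [h0, if_false]
          have h1 := ih1 ∅ (insert b ∅) (Finset.empty_subset _)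
          have h2 := ih2 (insert b t)
          omega

lemma nu_split {q : ℕ} (w : List (Fin q)) :
    ∀ s : Finset (Fin q), 1 ≤ nuAux s w → ∀ a : Fin q, a ∉ s →
      ∃ w₁ w₂ : List (Fin q), w = w₁ ++ a :: w₂ ∧ nuAux s w ≤ nuAux ∅ w₂ + 1 := by
  induction w with
  | nil => intro s h; simp [nuAux] at h
  | cons b rest ih =>
    intro s h a ha
    by_cases hb : insert b s = Finset.univ
    · have hab : a = b := by
        by_contra hab
        have : a ∈ insert b s := hb ▸ Finset.mem_univ a
        rcases Finset.mem_insert.mp this with h1 | h1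
        · exact hab h1
        · exact ha h1
      subst hab
      exact ⟨[], rest, rfl, by simp [nuAux, hb]⟩
    · by_cases hab : a = b
      · subst hab
        refine ⟨[], rest, rfl, ?_⟩
        simp only [nuAux, hb, if_false]
        exact (nu_mono rest).2 _
      · have ha' : a ∉ insert b s := by
          simp [Finset.mem_insert, hab, ha]
        have h' : 1 ≤ nuAux (insert b s) rest := by
          simpa [nuAux, hb] using h
        obtain ⟨w₁, w₂, hw, hle⟩ := ih (insert b s) h' a ha'
        refine ⟨b :: w₁, w₂, by rw [hw]; rfl, ?_⟩
        simpa [nuAux, hb] using hle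

lemma sublist_of_le_nu {q : ℕ} (u : List (Fin q)) :
    ∀ w : List (Fin q), u.length ≤ nuAux ∅ w → u.Sublist w := by
  induction u with
  | nil => intro w _; exact List.nil_sublist w
  | cons a u' ih =>
    intro w h
    have h1 : 1 ≤ nuAux (∅ : Finset (Fin q)) w := le_trans (by simp) h
    obtain ⟨w₁, w₂, hw, hle⟩ := nu_split w ∅ h1 a (Finset.notMem_empty a)
    subst hw
    have : u'.length ≤ nuAux ∅ w₂ := by
      simp only [List.length_cons] at h
      omega
    exact (List.cons_sublist_cons.mpr (ih w₂ this)).trans (List.sublist_append_right w₁ _)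

lemma hard_word {q : ℕ} (hq : 1 ≤ q) (w : List (Fin q)) :
    ∀ s : Finset (Fin q), s ≠ Finset.univ →
      ∃ (a : Fin q) (t : List (Fin q)),
        (a :: t).length = nuAux s w + 1 ∧ ¬ (a :: t).Sublist w ∧ a ∉ s := by
  induction w with
  | nil =>
    intro s hs
    obtain ⟨a, ha⟩ : ∃ a : Fin q, a ∉ s := by
      by_contra h
      push_neg at h
      exact hs (Finset.eq_univ_iff_forall.mpr h)
    exact ⟨a, [], by simp [nuAux], by simp, ha⟩
  | cons b rest ih =>
    intro s hs
    by_cases hb : insert b s = Finset.univ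
    · have h0 : (∅ : Finset (Fin q)) ≠ Finset.univ := by
        intro h
        have : (⟨0, by omega⟩ : Fin q) ∈ (∅ : Finset (Fin q)) := h ▸ Finset.mem_univ _
        simp at this
      obtain ⟨a, t, hlen, hsub, _⟩ := ih ∅ h0
      have hbs : b ∉ s := fun hmem => hs (by rwa [Finset.insert_eq_self.mpr hmem] at hb)
      refine ⟨b, a :: t, ?_, ?_, hbs⟩
      · simp only [nuAux, hb, if_true]
        simpa using hlen
      · intro hcontra
        exact hsub (List.cons_sublist_cons.mp hcontra)
    · obtain ⟨a, t, hlen, hsub, ha⟩ := ih (insert b s) hb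
      have hab : a ≠ b := fun h => ha (h ▸ Finset.mem_insert_self b s)
      refine ⟨a, t, ?_, ?_, fun h => ha (Finset.mem_insert_of_mem h)⟩
      · simp only [nuAux, hb, if_false]
        exact hlen
      · intro hcontra
        apply hsub
        cases hcontra with
        | cons _ h => exact h
        | cons_cons => exact absurd rfl hab

/-- A word `w` over a `q`-symbol alphabet is `k`-universal iff `ν_Σ(w) ≥ k`. -/
theorem universal_iff_nu_ge (q k : ℕ) (hq : 2 ≤ q) (w : List (Fin q)) :
    (∀ u : List (Fin q), u.length = k → u.Sublist w) ↔ k ≤ nuAux ∅ w := by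
  constructor
  · intro h
    by_contra hlt
    push_neg at hlt
    have h0 : (∅ : Finset (Fin q)) ≠ Finset.univ := by
      intro he
      have : (⟨0, by omega⟩ : Fin q) ∈ (∅ : Finset (Fin q)) := he ▸ Finset.mem_univ _
      simp at this
    obtain ⟨a, t, hlen, hsub, _⟩ := hard_word (by omega) w ∅ h0
    set u := a :: t
    have hul : u.length ≤ k := by omega
    have hv := h (u ++ List.replicate (k - u.length) a) (by simp; omega)
    exact hsub ((List.sublist_append_left u _).trans hv)
  · intro h u hu
    exact sublist_of_le_nu u w (hu ▸ h)
end
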